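/- For every measurable set A ⊆ X, the set A' := {x' ∈ X' : u'(x') > 0}, where u' is the Radon–Nikodym derivative of the image measure (λ restricted to A) ∘ T⁻¹ with respect to λ', is measurable and satisfies: for every measurable C' ⊆ X', λ'(A' ∩ C') > 0 if and only if λ(A ∩ T⁻¹C') > 0. Moreover, any two measurable sets A', B' ⊆ X' with this property satisfy λ'(A' △ B') = 0. -/

import Mathlib

open MeasureTheory Set

/-- For a null-preserving measurable map `T` between σ-finite measure
spaces and a measurable set `A`, the set `{u' > 0}`, where `u'` is the Radon–Nikodym
derivative of `(λ|_A) ∘ T⁻¹` with respect to `λ'`, is measurable and is characterized by: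
`λ'(A' ∩ C') > 0 ↔ λ(A ∩ T⁻¹C') > 0` for all measurable `C'`; moreover any two measurable
sets with this property agree up to `λ'`-null sets. -/
theorem stmt_0 {X X' : Type*} [MeasurableSpace X] [MeasurableSpace X']
    (lam : Measure X) (lam' : Measure X') [SigmaFinite lam] [SigmaFinite lam']
    (T : X → X') (hT : Measurable T) (hnp : lam.map T ≪ lam')
    (A : Set X) (hA : MeasurableSet A) :
    (MeasurableSet {x' | 0 < ((lam.restrict A).map T).rnDeriv lam' x'} ∧
      ∀ C' : Set X', MeasurableSet C' →
        (0 < lam' ({x' | 0 < ((lam.restrict A).map T).rnDeriv lam' x'} ∩ C') ↔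
          0 < lam (A ∩ T ⁻¹' C'))) ∧
    (∀ A' B' : Set X', MeasurableSet A' → MeasurableSet B' →
      (∀ C' : Set X', MeasurableSet C' →
        (0 < lam' (A' ∩ C') ↔ 0 < lam (A ∩ T ⁻¹' C'))) →
      (∀ C' : Set X', MeasurableSet C' →
        (0 < lam' (B' ∩ C') ↔ 0 < lam (A ∩ T ⁻¹' C'))) →
      lam' (symmDiff A' B') = 0) := by
  set μ : Measure X' := (lam.restrict A).map T with hμ
  have hac : μ ≪ lam' := by
    refine Measure.AbsolutelyContinuous.trans ?_ hnp
    exact Measure.map_mono Measure.restrict_le_self hT |>.absolutelyContinuous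
  have hf : Measurable (μ.rnDeriv lam') := μ.measurable_rnDeriv lam'
  have hmeas : MeasurableSet {x' | 0 < μ.rnDeriv lam' x'} :=
    measurableSet_lt measurable_const hf
  have hwd : lam'.withDensity (μ.rnDeriv lam') = μ :=
    Measure.withDensity_rnDeriv_eq μ lam' hac
  have key : ∀ C' : Set X', MeasurableSet C' → μ C' = lam (A ∩ T ⁻¹' C') := by
    intro C' hC'
    rw [hμ, Measure.map_apply hT hC', Measure.restrict_apply (hT hC'), inter_comm]
  constructor
  · refine ⟨hmeas, fun C' hC' => ?_⟩
    have h1 : μ C' = ∫⁻ x' in C', μ.rnDeriv lam' x' ∂lam' := by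
      rw [← withDensity_apply _ hC', hwd]
    have h2 : (0 < ∫⁻ x' in C', μ.rnDeriv lam' x' ∂lam') ↔
        0 < lam' (Function.support (μ.rnDeriv lam') ∩ C') := by
      rw [lintegral_pos_iff_support hf,
        Measure.restrict_apply (measurableSet_support hf)]
    have hsupp : Function.support (μ.rnDeriv lam') = {x' | 0 < μ.rnDeriv lam' x'} := by
      ext x'; simp [Function.mem_support, pos_iff_ne_zero]
    rw [← key C' hC', h1, h2, hsupp]
  · intro A' B' hA' hB' hPA hPB
    have hd : ∀ (S S' : Set X'), MeasurableSet S → MeasurableSet S' →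
        (∀ C' : Set X', MeasurableSet C' →
          (0 < lam' (S ∩ C') ↔ 0 < lam (A ∩ T ⁻¹' C'))) →
        (∀ C' : Set X', MeasurableSet C' →
          (0 < lam' (S' ∩ C') ↔ 0 < lam (A ∩ T ⁻¹' C'))) →
        lam' (S \ S') = 0 := by
      intro S S' hS hS' h1 h2
      by_contra h
      have hpos : 0 < lam' (S ∩ (S \ S')) := by
        rw [inter_eq_self_of_subset_right diff_subset]
        exact pos_iff_ne_zero.mpr h
      have := (h1 _ (hS.diff hS')).mp hpos
      have hzero := (h2 _ (hS.diff hS')).mpr this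
      have : lam' (S' ∩ (S \ S')) = 0 := by
        have : S' ∩ (S \ S') = ∅ := by
          ext x; simp (config := {contextual := true}) [and_comm]
        simp [this]
      simp [this] at hzero
    have h1 := hd A' B' hA' hB' hPA hPB
    have h2 := hd B' A' hB' hA' hPB hPA
    rw [symmDiff_def]
    exact le_antisymm ((measure_union_le _ _).trans (by simp [h1, h2])) zero_le
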